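/- Define C : ℕ⁺ → ℕ by C(n) = 0 if n is odd, and C(2m) = 2B(m) where B is the slow sequence in which every positive integer that is not a power of two appears exactly twice and every power of two appears exactly three times. Then C satisfies C(n) = C(n - 2 - C(n-2)) + C(n - 6 - C(n-6)) for all sufficiently large n, and C(n)/n has no limit: its lim sup is 1/2 and its lim inf is 0. -/

import Mathlib

open Filter

namespace WeaveAux

/-- Last position at which value `k` occurs in the slow sequence. -/
def s (k : ℕ) : ℕ := 2 * k + Nat.log 2 k + 1

lemma s_def (k : ℕ) : s k = 2 * k + Nat.log 2 k + 1 := rfl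

lemma s_mono : StrictMono s := by
  apply strictMono_nat_of_lt_succ
  intro k
  have := Nat.log_mono_right (b := 2) (show k ≤ k + 1 by omega)
  simp only [s_def]; omega

lemma b_exists (n : ℕ) : ∃ k, n ≤ s (k + 1) := ⟨n, by simp only [s_def]; omega⟩

/-- The slow sequence. -/
def b (n : ℕ) : ℕ := Nat.find (b_exists n) + 1

lemma b_pos (n : ℕ) : 1 ≤ b n := Nat.le_add_left 1 _

lemma le_s_b (n : ℕ) : n ≤ s (b n) := Nat.find_spec (b_exists n)

lemma s_lt_of_b {n : ℕ} (h : 2 ≤ b n) : s (b n - 1) < n := by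
  have h1 : 1 ≤ Nat.find (b_exists n) := by
    have : b n = Nat.find (b_exists n) + 1 := rfl
    omega
  have h2 := Nat.find_min (b_exists n) (m := Nat.find (b_exists n) - 1) (by omega)
  have h3 : b n - 1 = Nat.find (b_exists n) - 1 + 1 := by
    have : b n = Nat.find (b_exists n) + 1 := rfl
    omega
  rw [h3]
  omega

lemma s_one : s 1 = 3 := by
  have : Nat.log 2 1 = 0 := Nat.log_one_right 2
  simp only [s_def, this]

lemma b_eq_one {p : ℕ} (h : p ≤ 3) : b p = 1 := by
  have : Nat.find (b_exists p) = 0 := by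
    rw [Nat.find_eq_zero]
    rw [zero_add, s_one]; exact h
  simp only [b, this]

lemma b_eq {q p : ℕ} (h1 : s q < p) (h2 : p ≤ s (q + 1)) : b p = q + 1 := by
  have : Nat.find (b_exists p) = q := by
    rw [Nat.find_eq_iff]
    refine ⟨h2, fun j hj hle => ?_⟩
    have : s (j + 1) ≤ s q := s_mono.monotone (by omega)
    omega
  simp only [b, this]

lemma b_s {q : ℕ} (h : 1 ≤ q) : b (s q) = q := by
  rcases eq_or_lt_of_le h with h1 | h1
  · rw [← h1, s_one]; exact b_eq_one le_rfl
  · have := b_eq (q := q - 1) (p := s q) (s_mono (by omega)) (by rw [show q - 1 + 1 = q from by omega])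
    rw [show q - 1 + 1 = q from by omega] at this
    exact this

lemma L_double {q : ℕ} (h : 1 ≤ q) : Nat.log 2 (2 * q) = Nat.log 2 q + 1 := by
  rw [mul_comm]; exact Nat.log_mul_base one_lt_two (by omega)

lemma L_succ_le {k : ℕ} (h : 2 ≤ k) : Nat.log 2 k ≤ Nat.log 2 (k - 1) + 1 := by
  calc Nat.log 2 k ≤ Nat.log 2 (2 * (k - 1)) := Nat.log_mono_right (by omega)
  _ = Nat.log 2 (k - 1) + 1 := L_double (by omega)

lemma pow2_of_jump {k : ℕ} (h2 : 2 ≤ k) (h : Nat.log 2 k = Nat.log 2 (k - 1) + 1) :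
    k = 2 ^ Nat.log 2 k := by
  have h1 : 2 ^ Nat.log 2 k ≤ k := Nat.pow_log_le_self 2 (by omega)
  have h3 : k - 1 < 2 ^ (Nat.log 2 (k - 1) + 1) := Nat.lt_pow_succ_log_self one_lt_two _
  rw [← h] at h3
  omega

lemma L_pred_pow {t : ℕ} (h : 1 ≤ t) : Nat.log 2 (2 ^ t - 1) = t - 1 := by
  apply Nat.log_eq_of_pow_le_of_lt_pow
  · have : 2 ^ (t - 1) < 2 ^ t := Nat.pow_lt_pow_right one_lt_two (by omega)
    omega
  · rw [show t - 1 + 1 = t from by omega]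
    have : 1 ≤ 2 ^ t := Nat.one_le_two_pow
    omega

lemma key_hi_lo {k : ℕ} (h : 2 ≤ k) :
    b (k + Nat.log 2 (k - 1)) = (k + 1) / 2 ∧ b (k + Nat.log 2 (k - 1) - 1) = k / 2 := by
  rcases Nat.even_or_odd k with ⟨q, hq⟩ | ⟨q, hq⟩
  · -- k = 2q
    have hq1 : 1 ≤ q := by omega
    rcases eq_or_lt_of_le hq1 with h1 | h1
    · -- q = 1, k = 2
      have hk : k = 2 := by omega
      subst hk
      have : Nat.log 2 1 = 0 := Nat.log_one_right 2
      rw [show (2 : ℕ) - 1 = 1 from rfl, this]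
      constructor
      · exact b_eq_one (by omega)
      · exact b_eq_one (by omega)
    · -- q ≥ 2
      have hkq : k - 1 = 2 * q - 1 := by omega
      set t := Nat.log 2 (k - 1) with ht
      have htl : Nat.log 2 (q - 1) + 1 ≤ t := by
        rw [ht, hkq]
        calc Nat.log 2 (q - 1) + 1 = Nat.log 2 (2 * (q - 1)) := (L_double (by omega)).symm
        _ ≤ Nat.log 2 (2 * q - 1) := Nat.log_mono_right (by omega)
      have htu : t ≤ Nat.log 2 q + 1 := by
        rw [ht, hkq]
        calc Nat.log 2 (2 * q - 1) ≤ Nat.log 2 (2 * q) := Nat.log_mono_right (by omega)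
        _ = Nat.log 2 q + 1 := L_double (by omega)
      have hsq1 : s (q - 1) = 2 * (q - 1) + Nat.log 2 (q - 1) + 1 := s_def _
      have hsq : s q = 2 * q + Nat.log 2 q + 1 := s_def _
      have e1 : b (k + t) = q := by
        have := b_eq (q := q - 1) (p := k + t) (by omega) (by rw [show q - 1 + 1 = q from by omega]; omega)
        rw [show q - 1 + 1 = q from by omega] at this
        exact this
      have e2 : b (k + t - 1) = q := by
        have := b_eq (q := q - 1) (p := k + t - 1) (by omega) (by rw [show q - 1 + 1 = q from by omega]; omega)
        rw [show q - 1 + 1 = q from by omega] at this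
        exact this
      exact ⟨by rw [e1]; omega, by rw [e2]; omega⟩
  · -- k = 2q + 1, q ≥ 1
    have hq1 : 1 ≤ q := by omega
    have hkq : k - 1 = 2 * q := by omega
    set t := Nat.log 2 (k - 1) with ht
    have htq : t = Nat.log 2 q + 1 := by rw [ht, hkq]; exact L_double hq1
    have hsq : s q = 2 * q + Nat.log 2 q + 1 := s_def _
    have hm : k + t - 1 = s q := by omega
    have e2 : b (k + t - 1) = q := by rw [hm]; exact b_s hq1
    have hsq' : s (q + 1) = 2 * (q + 1) + Nat.log 2 (q + 1) + 1 := s_def _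
    have hmono : Nat.log 2 q ≤ Nat.log 2 (q + 1) := Nat.log_mono_right (by omega)
    have e1 : b (k + t) = q + 1 := b_eq (q := q) (by omega) (by omega)
    exact ⟨by rw [e1]; omega, by rw [e2]; omega⟩

lemma two_b_le {p : ℕ} (h : 2 ≤ b p) : 2 * b p ≤ p := by
  have h1 := s_lt_of_b h
  have h2 : s (b p - 1) = 2 * (b p - 1) + Nat.log 2 (b p - 1) + 1 := s_def _
  omega

lemma b_le_of_four {p : ℕ} (h : 4 ≤ p) : 2 ≤ b p := by
  by_contra h'
  have h1 : b p = 1 := by have := b_pos p; omega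
  have := le_s_b p
  rw [h1, s_one] at this
  omega

lemma b_add_one_le {p : ℕ} (h : 2 ≤ p) : b p + 1 ≤ p := by
  rcases le_or_gt 4 p with h4 | h4
  · have h2 := b_le_of_four h4
    have := two_b_le h2
    omega
  · have : b p = 1 := b_eq_one (by omega)
    omega

lemma b_rec {n : ℕ} (h : 5 ≤ n) :
    b n = b (n - 1 - b (n - 1)) + b (n - 3 - b (n - 3)) := by
  have hk2 : 2 ≤ b n := b_le_of_four (by omega)
  set k := b n with hk
  have hub : n ≤ s k := le_s_b n
  have hlb : s (k - 1) < n := s_lt_of_b hk2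
  set t := Nat.log 2 (k - 1) with ht
  have hs1 : s (k - 1) = 2 * (k - 1) + t + 1 := s_def _
  have hsk : s k = 2 * k + Nat.log 2 k + 1 := s_def _
  have hLk : Nat.log 2 k ≤ t + 1 := L_succ_le hk2
  have hLk0 : t ≤ Nat.log 2 k := Nat.log_mono_right (by omega)
  have hkey := key_hi_lo hk2
  rw [← ht] at hkey
  have hcase : n = 2 * k + t ∨ n = 2 * k + t + 1 ∨ n = 2 * k + t + 2 := by omega
  rcases hcase with hn | hn | hn
  · -- r = 1
    have hk3 : 3 ≤ k := by
      by_contra h'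
      have hk2' : k = 2 := by omega
      have : t = 0 := by rw [ht, hk2']; exact Nat.log_one_right 2
      omega
    have e1 : b (n - 1) = k - 1 := by
      rw [show n - 1 = s (k - 1) from by omega]
      exact b_s (by omega)
    have hi : n - 1 - b (n - 1) = k + t := by rw [e1]; omega
    -- analyze b (n - 3), depending on the block length of value k - 1
    have hL2 : Nat.log 2 (k - 2) ≤ t ∧ t ≤ Nat.log 2 (k - 2) + 1 := by
      constructor
      · rw [ht]; exact Nat.log_mono_right (by omega)
      · rw [ht]
        have := L_succ_le (k := k - 1) (by omega)
        rw [show k - 1 - 1 = k - 2 from by omega] at this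
        exact this
    have hs2 : s (k - 2) = 2 * (k - 2) + Nat.log 2 (k - 2) + 1 := s_def _
    rcases lt_or_eq_of_le hL2.1 with hlen | hlen
    · -- block of k-1 has length 3 : t = log(k-2) + 1, so k - 1 = 2 ^ t
      have hjump : Nat.log 2 (k - 1) = Nat.log 2 (k - 1 - 1) + 1 := by
        rw [show k - 1 - 1 = k - 2 from by omega, ← ht]; omega
      have hpow : k - 1 = 2 ^ t := by
        have := pow2_of_jump (k := k - 1) (by omega) hjump
        rw [← ht] at this; exact this
      have ht1 : 1 ≤ t := by
        by_contra h'
        have : t = 0 := by omega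
        rw [this] at hpow; simp at hpow; omega
      have e3 : b (n - 3) = k - 1 := by
        have := b_eq (q := k - 2) (p := n - 3) (by omega)
          (by rw [show k - 2 + 1 = k - 1 from by omega]; omega)
        rw [show k - 2 + 1 = k - 1 from by omega] at this
        exact this
      have hj : n - 3 - b (n - 3) = k + t - 2 := by rw [e3]; omega
      rw [hi, hj, hkey.1]
      have h2t : 2 ^ t = 2 * 2 ^ (t - 1) := by
        rw [← pow_succ']
        congr 1
        omega
      have e4 : b (k + t - 2) = 2 ^ (t - 1) := by
        rcases eq_or_lt_of_le ht1 with ht2 | ht2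
        · -- t = 1, k = 3, k + t - 2 = 2
          have ht2' : t = 1 := by omega
          have hk3' : k = 3 := by rw [ht2'] at hpow; norm_num at hpow; omega
          rw [show k + t - 2 = 2 from by omega]
          rw [b_eq_one (by omega)]
          rw [show t - 1 = 0 from by omega]
          rfl
        · -- t ≥ 2
          have hL3 : Nat.log 2 (2 ^ (t - 1) - 1) = t - 2 := by
            rw [L_pred_pow (by omega)]
            omega
          have hs3 : s (2 ^ (t - 1) - 1) = 2 * (2 ^ (t - 1) - 1) + (t - 2) + 1 := by
            rw [s_def, hL3]
          have hs4 : s (2 ^ (t - 1)) = 2 * 2 ^ (t - 1) + (t - 1) + 1 := by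
            rw [s_def, Nat.log_pow one_lt_two]
          have hp1 : 1 ≤ 2 ^ (t - 1) := Nat.one_le_two_pow
          have := b_eq (q := 2 ^ (t - 1) - 1) (p := k + t - 2) (by omega)
            (by rw [show 2 ^ (t - 1) - 1 + 1 = 2 ^ (t - 1) from by omega]; omega)
          rw [show 2 ^ (t - 1) - 1 + 1 = 2 ^ (t - 1) from by omega] at this
          exact this
      rw [e4]
      omega
    · -- block of k-1 has length 2 : t = log(k-2), so s(k-2) = n - 3
      have e3 : b (n - 3) = k - 2 := by
        rw [show n - 3 = s (k - 2) from by omega]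
        exact b_s (by omega)
      have hj : n - 3 - b (n - 3) = k + t - 1 := by rw [e3]; omega
      rw [hi, hj, hkey.1, hkey.2]
      omega
  · -- r = 2
    have e1 : b (n - 1) = k := by
      have := b_eq (q := k - 1) (p := n - 1) (by omega)
        (by rw [show k - 1 + 1 = k from by omega]; omega)
      rw [show k - 1 + 1 = k from by omega] at this
      exact this
    have hi : n - 1 - b (n - 1) = k + t := by rw [e1]; omega
    have e3 : b (n - 3) = k - 1 := by
      rcases le_or_gt 3 k with hk3 | hk3
      · have hL2 : Nat.log 2 (k - 2) ≤ t := by rw [ht]; exact Nat.log_mono_right (by omega)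
        have hs2 : s (k - 2) = 2 * (k - 2) + Nat.log 2 (k - 2) + 1 := s_def _
        have := b_eq (q := k - 2) (p := n - 3) (by omega)
          (by rw [show k - 2 + 1 = k - 1 from by omega]; omega)
        rw [show k - 2 + 1 = k - 1 from by omega] at this
        exact this
      · -- k = 2, t = 0, n = 5, n - 3 = 2
        have hk2' : k = 2 := by omega
        have ht0 : t = 0 := by rw [ht, hk2']; exact Nat.log_one_right 2
        rw [b_eq_one (by omega)]
        omega
    have hj : n - 3 - b (n - 3) = k + t - 1 := by rw [e3]; omega
    rw [hi, hj, hkey.1, hkey.2]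
    omega
  · -- r = 3 : n = s k, and k is a power of 2
    have hLk1 : Nat.log 2 k = t + 1 := by omega
    have hpow : k = 2 ^ (t + 1) := by
      have h' : Nat.log 2 k = Nat.log 2 (k - 1) + 1 := by rw [← ht]; omega
      have := pow2_of_jump hk2 h'
      rw [hLk1] at this; exact this
    have e1 : b (n - 1) = k := by
      have := b_eq (q := k - 1) (p := n - 1) (by omega)
        (by rw [show k - 1 + 1 = k from by omega]; omega)
      rw [show k - 1 + 1 = k from by omega] at this
      exact this
    have hi : n - 1 - b (n - 1) = k + t + 1 := by rw [e1]; omega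
    have e3 : b (n - 3) = k - 1 := by
      rw [show n - 3 = s (k - 1) from by omega]
      exact b_s (by omega)
    have hj : n - 3 - b (n - 3) = k + t := by rw [e3]; omega
    have h2t : 2 ^ (t + 1) = 2 * 2 ^ t := by rw [pow_succ']
    have e4 : b (k + t + 1) = 2 ^ t := by
      have hsp : s (2 ^ t) = 2 * 2 ^ t + t + 1 := by
        rw [s_def, Nat.log_pow one_lt_two]
      rw [show k + t + 1 = s (2 ^ t) from by omega]
      exact b_s Nat.one_le_two_pow
    rw [hi, hj, hkey.1, e4]
    omega

lemma sq_le_two_pow (t : ℕ) : t ^ 2 ≤ 2 ^ (t + 2) := by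
  induction t with
  | zero => norm_num
  | succ t ih =>
    have h1 : t < 2 ^ t := Nat.lt_two_pow_self
    have h2 : 2 ^ (t + 2) = 4 * 2 ^ t := by ring
    have h3 : 2 ^ (t + 1 + 2) = 8 * 2 ^ t := by ring
    have h4 : (t + 1) ^ 2 = t ^ 2 + 2 * t + 1 := by ring
    omega

lemma log_sq_le {m : ℕ} (h : 1 ≤ m) : Nat.log 2 m ^ 2 ≤ 4 * m := by
  have h1 := sq_le_two_pow (Nat.log 2 m)
  have h2 : 2 ^ (Nat.log 2 m + 2) = 4 * 2 ^ Nat.log 2 m := by ring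
  have h3 : 2 ^ Nat.log 2 m ≤ m := Nat.pow_log_le_self 2 (by omega)
  omega

lemma b_le_self {m : ℕ} (h : 1 ≤ m) : b m ≤ m := by
  rcases le_or_gt 2 (b m) with h2 | h2
  · have := two_b_le h2; omega
  · have := b_pos m; omega

lemma m_le_bound {m : ℕ} (h : 1 ≤ m) : m ≤ 2 * b m + Nat.log 2 m + 1 := by
  have h1 := le_s_b m
  have h2 : s (b m) = 2 * b m + Nat.log 2 (b m) + 1 := s_def _
  have h3 : Nat.log 2 (b m) ≤ Nat.log 2 m := Nat.log_mono_right (b_le_self h)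
  omega

lemma B_eq_b (B : ℕ → ℕ) (hB1 : B 1 = 1) (hB2 : B 2 = 1) (hB3 : B 3 = 1) (hB4 : B 4 = 2)
    (hBrec : ∀ n, 4 < n → B n = B (n - 1 - B (n - 1)) + B (n - 3 - B (n - 3))) :
    ∀ n, 1 ≤ n → B n = b n := by
  intro n
  induction n using Nat.strong_induction_on with
  | _ n ih =>
    intro hn
    rcases le_or_gt n 4 with h4 | h4
    · interval_cases n
      · rw [hB1, b_eq_one (by omega)]
      · rw [hB2, b_eq_one (by omega)]
      · rw [hB3, b_eq_one (by omega)]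
      · rw [hB4]
        have hl2 : Nat.log 2 2 = 1 := Nat.log_eq_of_pow_le_of_lt_pow (by norm_num) (by norm_num)
        have hs2 : s 2 = 6 := by rw [s_def, hl2]
        have := b_eq (q := 1) (p := 4) (by rw [s_one]; omega)
          (by rw [show (1 : ℕ) + 1 = 2 from rfl, hs2]; omega)
        omega
    · have h5 : 5 ≤ n := h4
      have e1 : B (n - 1) = b (n - 1) := ih (n - 1) (by omega) (by omega)
      have e3 : B (n - 3) = b (n - 3) := ih (n - 3) (by omega) (by omega)
      have hb1 : b (n - 1) + 1 ≤ n - 1 := b_add_one_le (by omega)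
      have hb3 : b (n - 3) + 1 ≤ n - 3 := b_add_one_le (by omega)
      rw [hBrec n (by omega), e1, e3,
        ih (n - 1 - b (n - 1)) (by omega) (by omega),
        ih (n - 3 - b (n - 3)) (by omega) (by omega),
        ← b_rec h5]

end WeaveAux

open WeaveAux

/-- Weaving the zero sequence with twice the slow sequence `B` (solution of
`B(n) = B(n-1-B(n-1)) + B(n-3-B(n-3))` with `B(1)=B(2)=B(3)=1`, `B(4)=2`)
gives a sequence `C` that satisfies `C(n) = C(n-2-C(n-2)) + C(n-6-C(n-6))` for
all sufficiently large `n`, while `C(n)/n` has lim sup `1/2` and lim inf `0`. -/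
theorem weave_no_limit (B C : ℕ → ℕ)
    (hB1 : B 1 = 1) (hB2 : B 2 = 1) (hB3 : B 3 = 1) (hB4 : B 4 = 2)
    (hBrec : ∀ n, 4 < n → B n = B (n - 1 - B (n - 1)) + B (n - 3 - B (n - 3)))
    (hCodd : ∀ n, Odd n → C n = 0)
    (hCeven : ∀ m, 1 ≤ m → C (2 * m) = 2 * B m) :
    (∃ N, ∀ n, N ≤ n → C n = C (n - 2 - C (n - 2)) + C (n - 6 - C (n - 6))) ∧
    Filter.limsup (fun n => (C n : ℝ) / (n : ℝ)) Filter.atTop = 1 / 2 ∧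
    Filter.liminf (fun n => (C n : ℝ) / (n : ℝ)) Filter.atTop = 0 := by
  have hBb := B_eq_b B hB1 hB2 hB3 hB4 hBrec
  have hCb : ∀ p, 1 ≤ p → C (2 * p) = 2 * b p := fun p hp => by
    rw [hCeven p hp, hBb p hp]
  refine ⟨⟨10, fun n hn => ?_⟩, ?_⟩
  · rcases Nat.even_or_odd n with ⟨m, hm⟩ | hodd
    · have hm5 : 5 ≤ m := by omega
      have h2 : C (n - 2) = 2 * b (m - 1) := by
        rw [show n - 2 = 2 * (m - 1) from by omega]
        exact hCb _ (by omega)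
      have h6 : C (n - 6) = 2 * b (m - 3) := by
        rw [show n - 6 = 2 * (m - 3) from by omega]
        exact hCb _ (by omega)
      have hb1 : b (m - 1) + 1 ≤ m - 1 := b_add_one_le (by omega)
      have hb3 : b (m - 3) + 1 ≤ m - 3 := b_add_one_le (by omega)
      have hCn : C n = 2 * b m := by
        rw [show n = 2 * m from by omega]; exact hCb _ (by omega)
      rw [hCn, h2, h6,
        show n - 2 - 2 * b (m - 1) = 2 * (m - 1 - b (m - 1)) from by omega,
        show n - 6 - 2 * b (m - 3) = 2 * (m - 3 - b (m - 3)) from by omega,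
        hCb _ (by omega), hCb _ (by omega), b_rec hm5]
      ring
    · have h1 : C n = 0 := hCodd n hodd
      obtain ⟨a, ha⟩ := hodd
      have h2 : C (n - 2) = 0 := hCodd _ ⟨a - 1, by omega⟩
      have h6 : C (n - 6) = 0 := hCodd _ ⟨a - 3, by omega⟩
      rw [h1, h2, h6, Nat.sub_zero, Nat.sub_zero, h2, h6]
  -- analytic part
  have hf0 : ∀ n : ℕ, 0 ≤ (C n : ℝ) / n := fun n => div_nonneg (Nat.cast_nonneg _) (Nat.cast_nonneg _)
  have hfhalf : ∀ n : ℕ, 5 ≤ n → (C n : ℝ) / n ≤ 1 / 2 := by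
    intro n hn
    rcases Nat.even_or_odd n with ⟨m, hm⟩ | hodd
    · have hm3 : 3 ≤ m := by omega
      have hc : C n = 2 * b m := by
        rw [show n = 2 * m from by omega]; exact hCb _ (by omega)
      have hnat : 2 * C n ≤ n := by
        rw [hc]
        rcases le_or_gt 2 (b m) with h2 | h2
        · have := two_b_le h2; omega
        · have := b_pos m; omega
      have hn0 : (0 : ℝ) < n := by exact_mod_cast (by omega : 0 < n)
      rw [div_le_iff₀ hn0]
      have hcast := (Nat.cast_le (α := ℝ)).2 hnat
      push_cast at hcast
      linarith
    · rw [hCodd n hodd]; norm_num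
  have hsq : ∀ m : ℕ, 1 ≤ m → (Nat.log 2 m : ℝ) ≤ 2 * Real.sqrt m := by
    intro m hm
    have h1 : Nat.log 2 m ^ 2 ≤ 4 * m := log_sq_le hm
    have h2 : ((Nat.log 2 m : ℝ)) ^ 2 ≤ 4 * m := by exact_mod_cast h1
    calc (Nat.log 2 m : ℝ) = Real.sqrt ((Nat.log 2 m : ℝ) ^ 2) :=
          (Real.sqrt_sq (Nat.cast_nonneg _)).symm
    _ ≤ Real.sqrt (4 * m) := Real.sqrt_le_sqrt h2
    _ = Real.sqrt 4 * Real.sqrt m := Real.sqrt_mul (by norm_num) _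
    _ = 2 * Real.sqrt m := by
        rw [show (4 : ℝ) = 2 ^ 2 by norm_num, Real.sqrt_sq (by norm_num : (0:ℝ) ≤ 2)]
  have hblow : ∀ m : ℕ, 1 ≤ m →
      1 / 2 - (Real.sqrt m)⁻¹ - ((m : ℝ))⁻¹ ≤ (b m : ℝ) / m := by
    intro m hm
    have hm0 : (0 : ℝ) < m := by exact_mod_cast hm
    have hs0 : (0 : ℝ) < Real.sqrt m := Real.sqrt_pos.2 hm0
    have h1 : m ≤ 2 * b m + Nat.log 2 m + 1 := m_le_bound hm
    have h2 : (m : ℝ) ≤ 2 * b m + Nat.log 2 m + 1 := by exact_mod_cast h1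
    have h3 := hsq m hm
    rw [le_div_iff₀ hm0]
    have h4 : Real.sqrt m * Real.sqrt m = m := Real.mul_self_sqrt hm0.le
    have h5 : (Real.sqrt m)⁻¹ * (m : ℝ) = Real.sqrt m := by
      rw [inv_mul_eq_iff_eq_mul₀ hs0.ne', h4]
    have h6 : ((m : ℝ))⁻¹ * (m : ℝ) = 1 := inv_mul_cancel₀ hm0.ne'
    have hexp : (1 / 2 - (Real.sqrt m)⁻¹ - ((m : ℝ))⁻¹) * m
        = (m : ℝ) / 2 - Real.sqrt m - 1 := by
      rw [sub_mul, sub_mul, h5, h6]; ring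
    rw [hexp]
    linarith
  have hlim : Filter.Tendsto (fun m : ℕ => 1 / 2 - (Real.sqrt m)⁻¹ - ((m : ℝ))⁻¹)
      Filter.atTop (nhds (1 / 2)) := by
    have t0 : Filter.Tendsto (fun m : ℕ => Real.sqrt m) Filter.atTop Filter.atTop := by
      rw [Filter.tendsto_atTop]
      intro bb
      filter_upwards [Filter.eventually_ge_atTop (Nat.ceil (bb ^ 2))] with m hm
      rcases le_or_gt bb 0 with hb | hb
      · exact hb.trans (Real.sqrt_nonneg _)
      · have h1 : bb ^ 2 ≤ (m : ℝ) := le_trans (Nat.le_ceil _) (by exact_mod_cast hm)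
        calc bb = Real.sqrt (bb ^ 2) := (Real.sqrt_sq hb.le).symm
        _ ≤ Real.sqrt m := Real.sqrt_le_sqrt h1
    have t1 : Filter.Tendsto (fun m : ℕ => (Real.sqrt m)⁻¹) Filter.atTop (nhds 0) :=
      t0.inv_tendsto_atTop
    have t2 : Filter.Tendsto (fun m : ℕ => ((m : ℝ))⁻¹) Filter.atTop (nhds 0) :=
      tendsto_inv_atTop_nhds_zero_nat
    have := ((tendsto_const_nhds (x := (1 / 2 : ℝ)) (f := Filter.atTop)).sub t1).sub t2
    simpa using this
  have htendb : Filter.Tendsto (fun m : ℕ => (b m : ℝ) / m) Filter.atTop (nhds (1 / 2)) := by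
    apply tendsto_of_tendsto_of_tendsto_of_le_of_le' hlim tendsto_const_nhds
    · filter_upwards [Filter.eventually_ge_atTop 1] with m hm
      exact hblow m hm
    · filter_upwards [Filter.eventually_ge_atTop 3] with m hm
      have hm0 : (0 : ℝ) < m := by exact_mod_cast (by omega : 0 < m)
      rw [div_le_iff₀ hm0]
      have hnat : 2 * b m ≤ m := by
        rcases le_or_gt 2 (b m) with h2 | h2
        · exact two_b_le h2
        · have := b_pos m; omega
      have hcast := (Nat.cast_le (α := ℝ)).2 hnat
      push_cast at hcast
      linarith
  have hev_half : ∀ᶠ n : ℕ in Filter.atTop, (C n : ℝ) / n ≤ 1 / 2 := by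
    filter_upwards [Filter.eventually_ge_atTop 5] with n hn
    exact hfhalf n hn
  have hev_0 : ∀ᶠ n : ℕ in Filter.atTop, (0 : ℝ) ≤ (C n : ℝ) / n :=
    Filter.Eventually.of_forall hf0
  have hbddup : Filter.IsBoundedUnder (· ≤ ·) Filter.atTop (fun n : ℕ => (C n : ℝ) / n) :=
    ⟨1 / 2, by simpa [Filter.eventually_map] using hev_half⟩
  have hbdddown : Filter.IsBoundedUnder (· ≥ ·) Filter.atTop (fun n : ℕ => (C n : ℝ) / n) :=
    ⟨0, by simpa [Filter.eventually_map] using hev_0⟩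
  constructor
  · apply le_antisymm
    · exact Filter.limsup_le_of_le
        (Filter.isCoboundedUnder_le_of_eventually_le _ hev_0) hev_half
    · apply le_of_forall_lt_imp_le_of_dense
      intro c hc
      apply Filter.le_limsup_of_frequently_le _ hbddup
      have hev : ∀ᶠ m : ℕ in Filter.atTop, c ≤ (b m : ℝ) / m :=
        htendb.eventually (eventually_ge_nhds hc)
      obtain ⟨M, hM⟩ := Filter.eventually_atTop.1 hev
      rw [Filter.frequently_atTop]
      intro a
      have haux : a ≤ max (max a M) 1 := le_trans (le_max_left a M) (le_max_left _ 1)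
      have hMle : M ≤ max (max a M) 1 := le_trans (le_max_right a M) (le_max_left _ 1)
      have h1 : 1 ≤ max (max a M) 1 := le_max_right _ _
      refine ⟨2 * max (max a M) 1, by omega, ?_⟩
      set mm := max (max a M) 1 with hmm
      have hc2 : C (2 * mm) = 2 * b mm := hCb _ h1
      have hle : c ≤ (b mm : ℝ) / mm := hM mm hMle
      calc c ≤ (b mm : ℝ) / mm := hle
      _ = (C (2 * mm) : ℝ) / ((2 * mm : ℕ) : ℝ) := by
          rw [hc2]; push_cast
          rw [mul_div_mul_left _ _ (by norm_num : (2 : ℝ) ≠ 0)]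
  · apply le_antisymm
    · apply Filter.liminf_le_of_frequently_le _ hbdddown
      rw [Filter.frequently_atTop]
      intro a
      refine ⟨2 * a + 1, by omega, ?_⟩
      rw [hCodd (2 * a + 1) ⟨a, rfl⟩]
      simp
    · exact Filter.le_liminf_of_le
        (Filter.isCoboundedUnder_ge_of_eventually_le _ hev_half) hev_0
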